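/- arXiv:2503.20611 — 3 statements merged into one kernel-verified Lean document; each statement's English description precedes it below -/
import Mathlib

section
/- Let n be a natural number, let f : ℝⁿ → ℝ be a convex function, and let s ⊆ ℝⁿ be a nonempty convex set such that f agrees on s with some affine function (i.e., there is an affine A : ℝⁿ → ℝ with f(x) = A(x) for all x ∈ s). Then there exists an affine function g : ℝⁿ → ℝ such that g(x) ≤ f(x) for all x ∈ ℝⁿ and g(x) = f(x) for all x ∈ s. -/
/-- If `f : ℝⁿ → ℝ` is convex and agrees with some affine function on a
nonempty convex set `s`, then there is a globally supporting affine function `g ≤ f`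
which coincides with `f` on `s`. -/
theorem exists_affine_support_of_convexOn_affine_on_convex
    (n : ℕ) (f : (Fin n → ℝ) → ℝ) (hf : ConvexOn ℝ Set.univ f)
    (s : Set (Fin n → ℝ)) (hs : s.Nonempty) (hsconv : Convex ℝ s)
    (A : (Fin n → ℝ) →ᵃ[ℝ] ℝ) (hA : ∀ x ∈ s, f x = A x) :
    ∃ g : (Fin n → ℝ) →ᵃ[ℝ] ℝ, (∀ x : Fin n → ℝ, g x ≤ f x) ∧ ∀ x ∈ s, g x = f x := by
  classical
  obtain ⟨x₀, hx₀⟩ := hs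
  -- f is continuous
  have hfc : Continuous f := by
    rw [← continuousOn_univ]
    exact hf.continuousOn isOpen_univ
  -- strict epigraph
  set S : Set ((Fin n → ℝ) × ℝ) := {p | f p.1 < p.2} with hSdef
  have hSopen : IsOpen S := isOpen_lt (hfc.comp continuous_fst) continuous_snd
  have hSconv : Convex ℝ S := by
    have := hf.convex_strict_epigraph
    simpa [Set.mem_univ] using this
  -- graph of A over s
  set F : (Fin n → ℝ) →ᵃ[ℝ] ((Fin n → ℝ) × ℝ) :=
    { toFun := fun x => (x, A x),
      linear := LinearMap.prod LinearMap.id A.linear,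
      map_vadd' := by
        intro p v
        simp only [Prod.ext_iff, vadd_eq_add, LinearMap.prod_apply, LinearMap.id_coe, id_eq,
          Prod.mk_add_mk, Function.prod]
        exact ⟨trivial, A.map_vadd p v⟩ } with hFdef
  set T : Set ((Fin n → ℝ) × ℝ) := F '' s with hTdef
  have hTconv : Convex ℝ T := hsconv.affine_image F
  have hdisj : Disjoint S T := by
    rw [Set.disjoint_left]
    rintro p hp ⟨x, hx, rfl⟩
    have hfa : f x = A x := hA x hx
    have hFx : F x = (x, A x) := rfl
    rw [hFx] at hp
    simp only [hSdef, Set.mem_setOf_eq] at hp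
    linarith
  obtain ⟨ℓ, u, hSu, hTu⟩ := geometric_hahn_banach_open hSconv hSopen hTconv hdisj
  set c : ℝ := ℓ (0, 1) with hcdef
  have key : ∀ (y : Fin n → ℝ) (t : ℝ), ℓ (y, t) = ℓ (y, 0) + t * c := by
    intro y t
    have h1 : (y, t) = (y, (0:ℝ)) + t • ((0 : Fin n → ℝ), (1:ℝ)) := by
      simp [Prod.ext_iff]
    rw [h1, map_add, map_smul, smul_eq_mul]
  have hstrict : ∀ (y : Fin n → ℝ) (t : ℝ), f y < t → ℓ (y, 0) + t * c < u := by
    intro y t ht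
    have := hSu (y, t) ht
    rwa [key] at this
  have hTineq : ∀ x ∈ s, u ≤ ℓ (x, 0) + A x * c := by
    intro x hx
    have := hTu (F x) ⟨x, hx, rfl⟩
    have hFx : F x = (x, A x) := rfl
    rwa [hFx, key] at this
  -- c < 0
  have hc : c < 0 := by
    rcases lt_trichotomy c 0 with h | h | h
    · exact h
    · exfalso
      have h1 := hstrict x₀ (f x₀ + 1) (by linarith)
      have h2 := hTineq x₀ hx₀
      have h3 : f x₀ = A x₀ := hA x₀ hx₀
      rw [h] at h1 h2
      simp at h1 h2
      linarith
    · exfalso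
      have h2 := hTineq x₀ hx₀
      set M : ℝ := max (f x₀ + 1) ((u - ℓ (x₀, 0)) / c + 1) with hM
      have hM1 : f x₀ < M := lt_of_lt_of_le (by linarith) (le_max_left _ _)
      have hM2 : (u - ℓ (x₀, 0)) / c < M := lt_of_lt_of_le (by linarith) (le_max_right _ _)
      have h1 := hstrict x₀ M hM1
      have : u - ℓ (x₀, 0) < M * c := by
        rw [div_lt_iff₀ h] at hM2
        linarith
      linarith
  -- the supporting affine map
  refine ⟨{ toFun := fun y => (u - ℓ (y, 0)) / c,
            linear := { toFun := fun v => -(ℓ (v, 0)) / c,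
                        map_add' := by
                          intro a b
                          have : ℓ (a + b, (0:ℝ)) = ℓ (a, 0) + ℓ (b, 0) := by
                            rw [← map_add]; norm_num
                          show -ℓ (a + b, (0:ℝ)) / c = -ℓ (a, 0) / c + -ℓ (b, 0) / c
                          rw [this]; ring
                        map_smul' := by
                          intro m a
                          have : ℓ (m • a, (0:ℝ)) = m * ℓ (a, 0) := by
                            have : (m • a, (0:ℝ)) = m • (a, (0:ℝ)) := by simp [Prod.ext_iff]
                            rw [this, map_smul, smul_eq_mul]
                          show -ℓ (m • a, (0:ℝ)) / c = m • (-ℓ (a, 0) / c)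
                          rw [this, smul_eq_mul]; ring },
            map_vadd' := by
              intro p v
              show (u - ℓ (v + p, 0)) / c = -ℓ (v, 0) / c +ᵥ (u - ℓ (p, 0)) / c
              have : ℓ (v + p, (0:ℝ)) = ℓ (v, 0) + ℓ (p, 0) := by
                rw [← map_add]; norm_num
              rw [vadd_eq_add, this]; ring }, ?_, ?_⟩
  · -- g ≤ f everywhere
    intro y
    show (u - ℓ (y, 0)) / c ≤ f y
    by_contra hcon
    push_neg at hcon
    set t : ℝ := (f y + (u - ℓ (y, 0)) / c) / 2 with htdef
    have ht : f y < t := by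
      simp only [htdef]; linarith
    have h1 := hstrict y t ht
    have h2 : t < (u - ℓ (y, 0)) / c := by
      simp only [htdef]; linarith
    have h3 : u - ℓ (y, 0) < t * c := by
      rw [lt_div_iff_of_neg hc] at h2
      linarith [h2]
    linarith
  · -- g = f on s
    intro x hx
    have h1 : (u - ℓ (x, 0)) / c ≤ f x := by
      -- reuse the first part's argument
      by_contra hcon
      push_neg at hcon
      set t : ℝ := (f x + (u - ℓ (x, 0)) / c) / 2 with htdef
      have ht : f x < t := by simp only [htdef]; linarith
      have h1 := hstrict x t ht
      have h2 : t < (u - ℓ (x, 0)) / c := by simp only [htdef]; linarith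
      have h3 : u - ℓ (x, 0) < t * c := by
        rw [lt_div_iff_of_neg hc] at h2
        linarith [h2]
      linarith
    have h2 := hTineq x hx
    have h3 : f x = A x := hA x hx
    have h4 : f x ≤ (u - ℓ (x, 0)) / c := by
      rw [le_div_iff_of_neg hc]
      nlinarith
    show (u - ℓ (x, 0)) / c = f x
    linarith
end

section
/- Let n be a natural number and let f : ℝⁿ → ℝ be a convex function. Let σ_1, …, σ_m be finitely many subsets of ℝⁿ whose union is all of ℝⁿ and each of which has nonempty topological interior, and let L_1, …, L_m : ℝⁿ → ℝ be affine functions such that f(x) = L_i(x) for all x ∈ σ_i and each i. Then f(x) = max_{1 ≤ i ≤ m} L_i(x) for every x ∈ ℝⁿ. -/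
lemma key_le (n : ℕ) (f : (Fin n → ℝ) → ℝ) (hf : ConvexOn ℝ Set.univ f)
    (σ : Set (Fin n → ℝ)) (hint : (interior σ).Nonempty)
    (L : (Fin n → ℝ) →ᵃ[ℝ] ℝ) (hL : ∀ x ∈ σ, f x = L x) :
    ∀ y, L y ≤ f y := by
  intro y
  obtain ⟨x0, hx0⟩ := hint
  obtain ⟨ε, hε, hball⟩ := Metric.isOpen_iff.mp isOpen_interior x0 hx0
  set t : ℝ := ε / (2 * (‖x0 - y‖ + 1)) with ht
  have hnorm : (0:ℝ) ≤ ‖x0 - y‖ := norm_nonneg _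
  have ht0 : 0 < t := by positivity
  set z : Fin n → ℝ := x0 + t • (x0 - y) with hz
  have hzball : z ∈ Metric.ball x0 ε := by
    rw [Metric.mem_ball, dist_eq_norm]
    have : z - x0 = t • (x0 - y) := by simp [hz]
    rw [this, norm_smul, Real.norm_eq_abs, abs_of_pos ht0]
    calc t * ‖x0 - y‖ < t * (2 * (‖x0 - y‖ + 1)) := by
          apply mul_lt_mul_of_pos_left _ ht0; nlinarith
      _ = ε := by rw [ht, div_mul_cancel₀]; positivity
  have hzσ : z ∈ σ := interior_subset (hball hzball)
  have hx0σ : x0 ∈ σ := interior_subset hx0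
  set a : ℝ := t / (1 + t) with ha
  set b : ℝ := 1 / (1 + t) with hb
  have h1t : (0:ℝ) < 1 + t := by linarith
  have ha0 : 0 ≤ a := by positivity
  have hb0 : 0 ≤ b := by positivity
  have hab : a + b = 1 := by rw [ha, hb, ← add_div, div_eq_one_iff_eq h1t.ne']; ring
  have hcombo : a • y + b • z = x0 := by
    rw [hz]; funext j
    simp [ha, hb, Pi.add_apply, Pi.smul_apply, smul_eq_mul]
    field_simp
    ring
  have hconv := hf.2 (Set.mem_univ y) (Set.mem_univ z) ha0 hb0 hab
  rw [hcombo] at hconv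
  have haff : L x0 = a • L y + b • L z := by
    rw [← hcombo, Convex.combo_affine_apply hab]
  rw [hL _ hx0σ, haff, hL _ hzσ] at hconv
  have ha0' : 0 < a := by positivity
  simp only [smul_eq_mul] at hconv
  nlinarith

/-- **Proposition 5.4 of the paper.** A convex function `f : ℝⁿ → ℝ`
which is facewise affine with respect to a finite cover of `ℝⁿ` by sets with nonempty
interior equals the maximum of its affine pieces. -/
theorem convexOn_eq_max_of_facewise_affine
    (n m : ℕ) (hm : 0 < m) (f : (Fin n → ℝ) → ℝ)
    (hf : ConvexOn ℝ Set.univ f)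
    (σ : Fin m → Set (Fin n → ℝ))
    (hcover : (⋃ i, σ i) = (Set.univ : Set (Fin n → ℝ)))
    (hint : ∀ i, (interior (σ i)).Nonempty)
    (L : Fin m → ((Fin n → ℝ) →ᵃ[ℝ] ℝ))
    (hL : ∀ i, ∀ x ∈ σ i, f x = L i x) :
    ∀ x : Fin n → ℝ,
      f x = Finset.univ.sup'
        (Finset.univ_nonempty_iff.mpr (Fin.pos_iff_nonempty.mp hm))
        (fun i => L i x) := by
  intro x
  apply le_antisymm
  · have hx : x ∈ ⋃ i, σ i := hcover ▸ Set.mem_univ x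
    obtain ⟨j, hj⟩ := Set.mem_iUnion.mp hx
    rw [hL j x hj]
    exact Finset.le_sup' (fun i => L i x) (Finset.mem_univ j)
  · exact Finset.sup'_le _ _ fun i _ => key_le n f hf (σ i) (hint i) (L i) (hL i) x
end

section
/- Let n be a natural number and let F : ℝⁿ → ℝ be a continuous function for which there exists a nonempty finite family of affine functions A_1, …, A_m on ℝⁿ such that for every x ∈ ℝⁿ there is some i with F(x) = A_i(x). Then there exist two nonempty finite families of affine functions (P_j)_{j ∈ J} and (Q_k)_{k ∈ K} on ℝⁿ such that F(x) = max_{j ∈ J} P_j(x) − max_{k ∈ K} Q_k(x) for all x ∈ ℝⁿ. -/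
open Finset Filter

/-- A function that is the pointwise `sup'` of a nonempty finite set of affine maps. -/
def IsMaxAff (n : ℕ) (f : (Fin n → ℝ) → ℝ) : Prop :=
  ∃ (s : Finset ((Fin n → ℝ) →ᵃ[ℝ] ℝ)) (hs : s.Nonempty),
    ∀ x, f x = s.sup' hs (fun B => B x)

lemma IsMaxAff.congr {n : ℕ} {f g : (Fin n → ℝ) → ℝ} (h : IsMaxAff n f)
    (e : ∀ x, f x = g x) : IsMaxAff n g := by
  obtain ⟨s, hs, hfs⟩ := h
  exact ⟨s, hs, fun x => (e x) ▸ hfs x⟩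

lemma isMaxAff_affine {n : ℕ} (B : (Fin n → ℝ) →ᵃ[ℝ] ℝ) :
    IsMaxAff n (fun x => B x) :=
  ⟨{B}, ⟨B, Finset.mem_singleton_self B⟩, fun x => by simp⟩

lemma isMaxAff_const {n : ℕ} (c : ℝ) : IsMaxAff n (fun _ => c) :=
  (isMaxAff_affine (AffineMap.const ℝ (Fin n → ℝ) c)).congr (fun x => by simp)

lemma IsMaxAff.add {n : ℕ} {f g : (Fin n → ℝ) → ℝ} (hf : IsMaxAff n f)
    (hg : IsMaxAff n g) : IsMaxAff n (fun x => f x + g x) := by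
  classical
  obtain ⟨s, hs, hfs⟩ := hf
  obtain ⟨t, ht, hgt⟩ := hg
  refine ⟨Finset.image₂ (· + ·) s t, hs.image₂ ht, fun x => ?_⟩
  show f x + g x = (Finset.image₂ (· + ·) s t).sup' (hs.image₂ ht) fun B => B x
  apply le_antisymm
  · obtain ⟨a, ha, hae⟩ := Finset.exists_mem_eq_sup' hs (fun B => B x)
    obtain ⟨b, hb, hbe⟩ := Finset.exists_mem_eq_sup' ht (fun B => B x)
    have hmem : a + b ∈ Finset.image₂ (· + ·) s t := Finset.mem_image₂_of_mem ha hb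
    have : f x + g x = (a + b) x := by
      rw [hfs, hgt, hae, hbe]; simp [AffineMap.coe_add]
    rw [this]
    exact Finset.le_sup' (fun B => B x) hmem
  · apply Finset.sup'_le
    intro C hC
    obtain ⟨a, ha, b, hb, rfl⟩ := Finset.mem_image₂.mp hC
    have h1 : a x ≤ f x := (hfs x) ▸ Finset.le_sup' (fun B => B x) ha
    have h2 : b x ≤ g x := (hgt x) ▸ Finset.le_sup' (fun B => B x) hb
    simp only [AffineMap.coe_add, Pi.add_apply]
    linarith

lemma IsMaxAff.max {n : ℕ} {f g : (Fin n → ℝ) → ℝ} (hf : IsMaxAff n f)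
    (hg : IsMaxAff n g) : IsMaxAff n (fun x => max (f x) (g x)) := by
  classical
  obtain ⟨s, hs, hfs⟩ := hf
  obtain ⟨t, ht, hgt⟩ := hg
  refine ⟨s ∪ t, hs.mono Finset.subset_union_left, fun x => ?_⟩
  rw [Finset.sup'_union hs ht (fun B => B x), ← hfs, ← hgt]

lemma isMaxAff_sup' {n : ℕ} {ι : Type*} (u : Finset ι) (hu : u.Nonempty)
    (f : ι → (Fin n → ℝ) → ℝ) (h : ∀ i ∈ u, IsMaxAff n (f i)) :
    IsMaxAff n (fun x => u.sup' hu (fun i => f i x)) := by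
  classical
  revert h
  induction hu using Finset.Nonempty.cons_induction with
  | singleton a =>
      intro h
      exact (h a (by simp)).congr (fun x => by simp)
  | cons a s ha hs ih =>
      intro h
      have h1 : IsMaxAff n (f a) := h a (by simp)
      have h2 := ih (fun i hi => h i (by simp [hi]))
      exact (h1.max h2).congr (fun x => (Finset.sup'_cons hs (fun i => f i x)).symm)

lemma isMaxAff_sum {n : ℕ} {ι : Type*} (u : Finset ι)
    (f : ι → (Fin n → ℝ) → ℝ) (h : ∀ i ∈ u, IsMaxAff n (f i)) :
    IsMaxAff n (fun x => ∑ i ∈ u, f i x) := by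
  classical
  induction u using Finset.cons_induction with
  | empty => exact (isMaxAff_const (n := n) 0).congr (fun x => by simp)
  | cons a s ha ih =>
      have h1 : IsMaxAff n (f a) := h a (by simp)
      have h2 := ih (fun i hi => h i (by simp [hi]))
      exact (h1.add h2).congr (fun x => by rw [Finset.sum_cons])

lemma sup'_add_const {ι : Type*} (s : Finset ι) (hs : s.Nonempty) (f : ι → ℝ) (a : ℝ) :
    s.sup' hs f + a = s.sup' hs (fun i => f i + a) := by
  apply le_antisymm
  · obtain ⟨i, hi, he⟩ := Finset.exists_mem_eq_sup' hs f
    rw [he]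
    exact Finset.le_sup' (fun i => f i + a) hi
  · apply Finset.sup'_le
    intro i hi
    have := Finset.le_sup' f hi
    linarith

lemma sup'_equivFin {α : Type*} (s : Finset α) (hs : s.Nonempty) (f : α → ℝ)
    (h : (Finset.univ : Finset (Fin s.card)).Nonempty) :
    Finset.univ.sup' h (fun j => f (s.equivFin.symm j : α)) = s.sup' hs f := by
  apply le_antisymm
  · apply Finset.sup'_le
    intro j _
    exact Finset.le_sup' f (s.equivFin.symm j).2
  · apply Finset.sup'_le
    intro a ha
    have := Finset.le_sup' (fun j => f (s.equivFin.symm j : α))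
      (Finset.mem_univ (s.equivFin ⟨a, ha⟩))
    simpa only [Equiv.symm_apply_apply] using this

/-- One-dimensional key lemma: if a continuous function on `[0,1]` agrees at each point
with one of finitely many affine functions, then some affine function is `≥ f` at `0`
and `≤ f` at `1`. -/
lemma oneDim {m : ℕ} (f : ℝ → ℝ) (hf : Continuous f) (c d : Fin m → ℝ)
    (hx : ∀ t ∈ Set.Icc (0:ℝ) 1, ∃ j, f t = c j + d j * t) :
    ∃ j, f 0 ≤ c j ∧ c j + d j ≤ f 1 := by
  classical
  set b : Fin m → ℝ → ℝ := fun j t => c j + d j * t with hb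
  set S : Set ℝ := Set.Icc 0 1 ∩ ⋃ j ∈ {j : Fin m | f 0 ≤ c j}, {t | b j t ≤ f t} with hS
  have hSclosed : IsClosed S := by
    apply IsClosed.inter isClosed_Icc
    apply Set.Finite.isClosed_biUnion (Set.toFinite _)
    intro j _
    exact isClosed_le (by fun_prop) hf
  have h0S : (0:ℝ) ∈ S := by
    obtain ⟨i, hi⟩ := hx 0 (by norm_num)
    have hi' : f 0 = c i := by rw [hi]; ring
    refine ⟨by norm_num, Set.mem_biUnion (show i ∈ {j : Fin m | f 0 ≤ c j} from hi'.le) ?_⟩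
    show b i 0 ≤ f 0
    simp [hb, hi'.symm.le]
  have hbdd : BddAbove S := ⟨1, fun t ht => ht.1.2⟩
  set s := sSup S with hsdef
  have hsS : s ∈ S := hSclosed.csSup_mem ⟨0, h0S⟩ hbdd
  obtain ⟨hsIcc, hsU⟩ := hsS
  rw [Set.mem_iUnion₂] at hsU
  obtain ⟨j, hj0, hjs⟩ := hsU
  have hj0 : f 0 ≤ c j := hj0
  have hjs : b j s ≤ f s := hjs
  by_cases hs1 : s = 1
  · refine ⟨j, hj0, ?_⟩
    have := hjs
    rw [hs1] at this
    simpa [hb] using this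
  · exfalso
    have hslt : s < 1 := lt_of_le_of_ne hsIcc.2 hs1
    have hle : ∀ t ∈ S, t ≤ s := fun t ht => le_csSup hbdd ht
    have claimA : ∀ t ∈ Set.Ioc s 1, ∀ k, f t = b k t → b k 0 < f 0 := by
      intro t ht k hk
      by_contra hcon
      push_neg at hcon
      have hck : f 0 ≤ c k := by
        have : b k 0 = c k := by simp [hb]
        linarith
      have htS : t ∈ S := by
        refine ⟨⟨le_trans hsIcc.1 ht.1.le, ht.2⟩,
          Set.mem_biUnion (show k ∈ {j : Fin m | f 0 ≤ c j} from hck) ?_⟩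
        show b k t ≤ f t
        exact hk.symm.le
      exact absurd (hle t htS) (not_le.mpr ht.1)
    have hev1 : ∀ᶠ t in nhdsWithin s (Set.Ioi s), t ∈ Set.Ioc s 1 :=
      Ioc_mem_nhdsGT_of_mem ⟨le_refl s, hslt⟩
    have hev2 : ∀ᶠ t in nhdsWithin s (Set.Ioi s), ∀ k, b k s ≠ f s → b k t ≠ f t := by
      rw [Filter.eventually_all]
      intro k
      by_cases hk : b k s = f s
      · exact Filter.Eventually.of_forall (fun t h => absurd hk h)
      · have hc : Continuous fun t => b k t - f t := by
          simp only [hb]; fun_prop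
        have := hc.continuousAt (x := s) |>.eventually_ne (sub_ne_zero.mpr hk)
        have := this.filter_mono (nhdsWithin_le_nhds (s := Set.Ioi s))
        filter_upwards [this] with t ht _
        exact sub_ne_zero.mp ht
    obtain ⟨t, htIoc, htprop⟩ := (hev1.and hev2).exists
    obtain ⟨k, hk⟩ := hx t ⟨le_trans hsIcc.1 htIoc.1.le, htIoc.2⟩
    have hks : b k s = f s := by
      by_contra h
      exact (htprop k h) hk.symm
    have hk0 : b k 0 < f 0 := claimA t htIoc k hk
    have hbj0 : b j 0 = c j := by simp [hb]
    have hbk0 : b k 0 = c k := by simp [hb]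
    have hp0 : 0 < (c j - c k) := by rw [← hbj0, ← hbk0]; linarith
    have hps : (c j - c k) + (d j - d k) * s ≤ 0 := by
      have : b j s - b k s ≤ 0 := by rw [hks]; linarith
      simp only [hb] at this
      linarith
    have hspos : 0 < s := by
      rcases lt_or_eq_of_le hsIcc.1 with h | h
      · exact h
      · exfalso; rw [← h] at hps; simp at hps; linarith
    have hslope : d j - d k < 0 := by nlinarith
    have hts : s < t := htIoc.1
    have hjt : b j t ≤ b k t := by
      simp only [hb]
      nlinarith
    have htS : t ∈ S := by
      refine ⟨⟨le_trans hsIcc.1 hts.le, htIoc.2⟩,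
        Set.mem_biUnion (show j ∈ {j : Fin m | f 0 ≤ c j} from hj0) ?_⟩
      show b j t ≤ f t
      rw [hk]
      exact hjt
    exact absurd (hle t htS) (not_le.mpr hts)

/-- Key lemma in `ℝⁿ`: for any two points there is an affine piece that is above `F`
at `x` and below `F` at `y`. -/
lemma key_lemma {n m : ℕ} {F : (Fin n → ℝ) → ℝ} (hF : Continuous F)
    (A : Fin m → ((Fin n → ℝ) →ᵃ[ℝ] ℝ))
    (hA : ∀ x, ∃ i, F x = A i x) (x y : Fin n → ℝ) :
    ∃ j, F x ≤ A j x ∧ A j y ≤ F y := by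
  have hline : Continuous fun t : ℝ => (AffineMap.lineMap x y : ℝ →ᵃ[ℝ] (Fin n → ℝ)) t :=
    AffineMap.lineMap_continuous
  have hx : ∀ t ∈ Set.Icc (0:ℝ) 1, ∃ j, (fun t => F (AffineMap.lineMap x y t)) t
      = A j x + (A j y - A j x) * t := by
    intro t ht
    obtain ⟨i, hi⟩ := hA (AffineMap.lineMap x y t)
    refine ⟨i, ?_⟩
    show F (AffineMap.lineMap x y t) = _
    rw [hi, AffineMap.apply_lineMap]
    simp only [AffineMap.lineMap_apply, vsub_eq_sub, vadd_eq_add, smul_eq_mul]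
    ring
  obtain ⟨j, h1, h2⟩ := oneDim (fun t => F (AffineMap.lineMap x y t)) (hF.comp hline)
    (fun j => A j x) (fun j => A j y - A j x) hx
  refine ⟨j, ?_, ?_⟩
  · simpa using h1
  · have : A j x + (A j y - A j x) = A j y := by ring
    rw [this] at h2
    simpa using h2

/-- A continuous piecewise affine function `F : ℝⁿ → ℝ` (everywhere
equal to one of finitely many affine functions) is a difference of two maxima of
nonempty finite families of affine functions. -/
theorem continuous_piecewise_affine_eq_sub_of_max
    (n : ℕ) (F : (Fin n → ℝ) → ℝ) (hF : Continuous F)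
    (m : ℕ) (hm : 0 < m) (A : Fin m → ((Fin n → ℝ) →ᵃ[ℝ] ℝ))
    (hA : ∀ x : Fin n → ℝ, ∃ i : Fin m, F x = A i x) :
    ∃ (J K : ℕ) (hJ : 0 < J) (hK : 0 < K)
      (P : Fin J → ((Fin n → ℝ) →ᵃ[ℝ] ℝ))
      (Q : Fin K → ((Fin n → ℝ) →ᵃ[ℝ] ℝ)),
      ∀ x : Fin n → ℝ,
        F x =
          (Finset.univ.sup' (Finset.univ_nonempty_iff.mpr (Fin.pos_iff_nonempty.mp hJ))
            fun j => P j x)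
          - (Finset.univ.sup' (Finset.univ_nonempty_iff.mpr (Fin.pos_iff_nonempty.mp hK))
            fun k => Q k x) := by
  classical
  set 𝒮 : Finset (Finset (Fin m)) :=
    Finset.univ.filter (fun S => S.Nonempty ∧ ∀ z, ∃ j ∈ S, A j z ≤ F z) with h𝒮
  have hmem𝒮 : ∀ S, S ∈ 𝒮 ↔ S.Nonempty ∧ ∀ z, ∃ j ∈ S, A j z ≤ F z := by
    intro S; simp [h𝒮]
  have hSx : ∀ x, (Finset.univ.filter (fun j => F x ≤ A j x)) ∈ 𝒮 := by
    intro x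
    rw [hmem𝒮]
    constructor
    · obtain ⟨i, hi⟩ := hA x
      exact ⟨i, by simp [hi.le]⟩
    · intro z
      obtain ⟨j, hj1, hj2⟩ := key_lemma hF A hA x z
      exact ⟨j, by simp [hj1], hj2⟩
  have h𝒮ne : 𝒮.Nonempty := ⟨_, hSx 0⟩
  set h : Finset (Fin m) → (Fin n → ℝ) → ℝ :=
    fun S x => if hS : S.Nonempty then S.sup' hS (fun j => -(A j x)) else 0 with hh
  have hMA : ∀ S ∈ 𝒮, IsMaxAff n (h S) := by
    intro S hS
    have hSne : S.Nonempty := ((hmem𝒮 S).mp hS).1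
    refine (isMaxAff_sup' S hSne (fun j x => (-(A j)) x)
      (fun j _ => isMaxAff_affine _)).congr (fun x => ?_)
    simp only [hh, dif_pos hSne, AffineMap.coe_neg, Pi.neg_apply]
  have hcentral : ∀ x, F x = 𝒮.sup' h𝒮ne (fun S => -(h S x)) := by
    intro x
    apply le_antisymm
    · refine le_trans ?_ (Finset.le_sup' (fun S => -(h S x)) (hSx x))
      have hne : (Finset.univ.filter fun j => F x ≤ A j x).Nonempty :=
        ((hmem𝒮 _).mp (hSx x)).1
      simp only [hh, dif_pos hne]
      rw [le_neg]
      apply Finset.sup'_le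
      intro j hj
      have : F x ≤ A j x := (Finset.mem_filter.mp hj).2
      linarith
    · apply Finset.sup'_le
      intro S hS
      obtain ⟨hSne, hprop⟩ := (hmem𝒮 S).mp hS
      obtain ⟨j, hjS, hjle⟩ := hprop x
      simp only [hh, dif_pos hSne]
      rw [neg_le]
      exact le_trans (neg_le_neg hjle) (Finset.le_sup' (fun j => -(A j x)) hjS)
  set G : (Fin n → ℝ) → ℝ := fun x => ∑ S ∈ 𝒮, h S x with hG
  have hGMA : IsMaxAff n G := isMaxAff_sum 𝒮 h hMA
  have hFGMA : IsMaxAff n (fun x => F x + G x) := by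
    have h1 : ∀ x, F x + G x = 𝒮.sup' h𝒮ne (fun S => ∑ S' ∈ 𝒮.erase S, h S' x) := by
      intro x
      rw [hcentral x, sup'_add_const 𝒮 h𝒮ne _ (G x)]
      apply Finset.sup'_congr h𝒮ne rfl
      intro S hS
      rw [Finset.sum_erase_eq_sub hS]
      simp only [hG]
      ring
    refine (isMaxAff_sup' 𝒮 h𝒮ne (fun S x => ∑ S' ∈ 𝒮.erase S, h S' x)
      (fun S hS => isMaxAff_sum _ _
        (fun S' hS' => hMA S' (Finset.mem_of_mem_erase hS')))).congr
      (fun x => (h1 x).symm)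
  obtain ⟨s₁, hs₁, he₁⟩ := hFGMA
  obtain ⟨s₂, hs₂, he₂⟩ := hGMA
  refine ⟨s₁.card, s₂.card, Finset.card_pos.mpr hs₁, Finset.card_pos.mpr hs₂,
    fun j => (s₁.equivFin.symm j : _), fun k => (s₂.equivFin.symm k : _), fun x => ?_⟩
  rw [sup'_equivFin s₁ hs₁ (fun B => B x), sup'_equivFin s₂ hs₂ (fun B => B x),
    ← he₁ x, ← he₂ x]
  ring
end
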